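/- The r-uniform 2-edge cycle C_2^{(r)} (two r-edges sharing exactly two vertices, r ≥ 3) has spectral radius exactly (r−1)!·4^{1/r}. -/

import Mathlib

open Finset

/-- Spectral radius of an `r`-uniform hypergraph with edge set `E`. -/
noncomputable def specRad (r : ℕ) {V : Type} [Fintype V] (E : Finset (Finset V)) : ℝ :=
  sSup {ρ : ℝ | ∃ x : V → ℝ, (∀ v, 0 ≤ x v) ∧ x ≠ 0 ∧
    ρ = (Nat.factorial r : ℝ) * (∑ e ∈ E, ∏ v ∈ e, x v) / (∑ v, x v ^ r)}

/-- The product over an edge of the labeling `1/2` on shared incidences is `1/4`. -/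
lemma prodc_eq {V : Type} [DecidableEq V] {f t : Finset V} (hft : t ⊆ f) (ht : t.card = 2) :
    (∏ v ∈ f, (if v ∈ t then (1/2 : ℝ) else 1)) = 1/4 := by
  rw [Finset.prod_ite_mem, Finset.inter_comm, Finset.inter_eq_left.mpr hft,
    Finset.prod_const, ht]
  norm_num

/-- Per-edge weighted AM-GM. -/
lemma edge_amgm {r : ℕ} (hr : 1 ≤ r) {V : Type} [DecidableEq V] (f t : Finset V)
    (hft : t ⊆ f) (hf : f.card = r) (ht : t.card = 2) (x : V → ℝ) (hx : ∀ v, 0 ≤ x v) :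
    (∏ v ∈ f, x v) ≤
      (4 : ℝ) ^ ((1 : ℝ) / r) *
        ∑ v ∈ f, (1 / (r : ℝ)) * ((if v ∈ t then (1/2 : ℝ) else 1) * x v ^ r) := by
  have hrne : (r : ℝ) ≠ 0 := Nat.cast_ne_zero.mpr (by omega)
  set c : V → ℝ := fun v => if v ∈ t then (1/2 : ℝ) else 1 with hc
  have hcnn : ∀ v, 0 ≤ c v := by
    intro v; simp only [hc]; split <;> norm_num
  have key := Real.geom_mean_le_arith_mean_weighted f (fun _ => 1 / (r : ℝ))
      (fun v => c v * x v ^ r) (fun i _ => by positivity)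
      (by rw [Finset.sum_const, hf, nsmul_eq_mul]; field_simp)
      (fun i _ => mul_nonneg (hcnn i) (pow_nonneg (hx i) r))
  have hP : (∏ v ∈ f, (c v * x v ^ r) ^ ((1 : ℝ) / r))
      = (1/4 : ℝ) ^ ((1 : ℝ) / r) * ∏ v ∈ f, x v := by
    rw [Real.finset_prod_rpow f _ (fun i _ => mul_nonneg (hcnn i) (pow_nonneg (hx i) r)),
      Finset.prod_mul_distrib, prodc_eq hft ht, Finset.prod_pow,
      Real.mul_rpow (by norm_num) (pow_nonneg (Finset.prod_nonneg fun i _ => hx i) r),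
      ← Real.rpow_natCast (∏ v ∈ f, x v) r,
      ← Real.rpow_mul (Finset.prod_nonneg fun i _ => hx i),
      mul_one_div_cancel hrne, Real.rpow_one]
  calc (∏ v ∈ f, x v)
      = (4 : ℝ) ^ ((1 : ℝ) / r) * ((1/4 : ℝ) ^ ((1 : ℝ) / r) * ∏ v ∈ f, x v) := by
        rw [← mul_assoc, ← Real.mul_rpow (by norm_num) (by norm_num)]
        norm_num
    _ ≤ _ := by
        apply mul_le_mul_of_nonneg_left _ (Real.rpow_nonneg (by norm_num) _)
        rw [← hP]
        exact key

/-- the `r`-uniform 2-edge cycle `C_2^{(r)}` (two `r`-edges sharing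
exactly two vertices, `r ≥ 3`) has spectral radius exactly `(r−1)!·4^{1/r}`. -/
theorem twoEdgeCycle_specRad (r N : ℕ) (hr : 3 ≤ r)
    (e e' : Finset (Fin N)) (he : e.card = r) (he' : e'.card = r) (hne : e ≠ e')
    (hint : (e ∩ e').card = 2) (hcov : e ∪ e' = Finset.univ) :
    specRad r ({e, e'} : Finset (Finset (Fin N))) =
      (Nat.factorial (r - 1) : ℝ) * (4 : ℝ) ^ ((1 : ℝ) / r) := by
  have hrne : (r : ℝ) ≠ 0 := Nat.cast_ne_zero.mpr (by omega)
  have hte : e ∩ e' ⊆ e := Finset.inter_subset_left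
  have hte' : e ∩ e' ⊆ e' := Finset.inter_subset_right
  have hN : N = 2 * r - 2 := by
    have h := Finset.card_union_add_card_inter e e'
    rw [hcov, Finset.card_univ, Fintype.card_fin, hint, he, he'] at h
    omega
  have hfact : (Nat.factorial r : ℝ) = r * (Nat.factorial (r - 1)) := by
    rw [← Nat.mul_factorial_pred (by omega : r ≠ 0)]
    push_cast; ring
  set a : ℝ := (2 : ℝ) ^ ((1 : ℝ) / r) with hadef
  have ha : 0 < a := Real.rpow_pos_of_pos (by norm_num) _
  have har : a ^ r = 2 := by
    rw [hadef, ← Real.rpow_natCast ((2:ℝ) ^ ((1:ℝ)/r)) r,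
      ← Real.rpow_mul (by norm_num : (0:ℝ) ≤ 2), one_div_mul_cancel hrne, Real.rpow_one]
  have ha2 : a ^ 2 = (4 : ℝ) ^ ((1 : ℝ) / r) := by
    rw [hadef, ← Real.rpow_natCast ((2:ℝ) ^ ((1:ℝ)/r)) 2,
      ← Real.rpow_mul (by norm_num : (0:ℝ) ≤ 2)]
    rw [show (4:ℝ) = (2:ℝ) ^ ((2:ℕ):ℝ) by rw [Real.rpow_natCast]; norm_num,
      ← Real.rpow_mul (by norm_num : (0:ℝ) ≤ 2)]
    norm_num [mul_comm]
  apply IsGreatest.csSup_eq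
  constructor
  · -- membership: the optimizing vector
    refine ⟨fun v => if v ∈ e ∩ e' then a else 1, fun v => ?_, ?_, ?_⟩
    · dsimp only; split
      · exact ha.le
      · norm_num
    · intro h0
      have hv := congrFun h0 ⟨0, by omega⟩
      simp only [Pi.zero_apply] at hv
      split at hv
      · exact ha.ne' hv
      · exact one_ne_zero hv
    · have hprod : ∀ f : Finset (Fin N), e ∩ e' ⊆ f →
          (∏ v ∈ f, (if v ∈ e ∩ e' then a else 1)) = a ^ 2 := by
        intro f hf
        rw [Finset.prod_ite_mem, Finset.inter_comm, Finset.inter_eq_left.mpr hf,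
          Finset.prod_const, hint]
      have hden : (∑ v : Fin N, (if v ∈ e ∩ e' then a else 1) ^ r) = 2 * (r : ℝ) := by
        have step : ∀ v : Fin N, (if v ∈ e ∩ e' then a else 1) ^ r
            = 1 + (if v ∈ e ∩ e' then (1:ℝ) else 0) := by
          intro v; split
          · rw [har]; norm_num
          · rw [one_pow]; norm_num
        rw [Finset.sum_congr rfl fun v _ => step v, Finset.sum_add_distrib,
          Finset.sum_ite_mem, Finset.univ_inter, Finset.sum_const, Finset.sum_const, hint,
          Finset.card_univ, Fintype.card_fin]
        have h2r : (2:ℕ) ≤ 2 * r := by omega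
        rw [hN]
        simp only [nsmul_eq_mul, mul_one]
        rw [Nat.cast_sub h2r]
        push_cast
        ring
      rw [Finset.sum_pair hne, hprod e hte, hprod e' hte', hden, ha2, hfact]
      field_simp
      ring
  · -- upper bound
    rintro ρ ⟨x, hx0, hxne, rfl⟩
    have hynn : ∀ v, (0:ℝ) ≤ x v ^ r := fun v => pow_nonneg (hx0 v) r
    have hden : 0 < ∑ v, x v ^ r := by
      obtain ⟨v, hv⟩ := Function.ne_iff.mp hxne
      have hxv : 0 < x v := lt_of_le_of_ne (hx0 v) (Ne.symm (by simpa using hv))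
      exact Finset.sum_pos' (fun i _ => hynn i) ⟨v, Finset.mem_univ v, pow_pos hxv r⟩
    rw [div_le_iff₀ hden, Finset.sum_pair hne]
    have k1 := edge_amgm (by omega) e (e ∩ e') hte he hint x hx0
    have k2 := edge_amgm (by omega) e' (e ∩ e') hte' he' hint x hx0
    set g : Fin N → ℝ := fun v => (1 / (r : ℝ)) * ((if v ∈ e ∩ e' then (1/2 : ℝ) else 1) * x v ^ r)
      with hg
    have hsum : (∑ v ∈ e, g v) + (∑ v ∈ e', g v) = (1 / (r : ℝ)) * ∑ v, x v ^ r := by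
      rw [← Finset.sum_union_inter, hcov]
      have hrepl : (∑ v ∈ e ∩ e', g v)
          = ∑ v : Fin N, (if v ∈ e ∩ e' then g v else 0) := by
        rw [Finset.sum_ite_mem, Finset.univ_inter]
      rw [hrepl, ← Finset.sum_add_distrib, Finset.mul_sum]
      apply Finset.sum_congr rfl
      intro v _
      by_cases hv : v ∈ e ∩ e'
      · simp only [hg, if_pos hv]; ring
      · simp only [hg, if_neg hv]; ring
    calc (Nat.factorial r : ℝ) * ((∏ v ∈ e, x v) + (∏ v ∈ e', x v))
        ≤ (Nat.factorial r : ℝ) * ((4:ℝ) ^ ((1:ℝ)/r) * ∑ v ∈ e, g v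
            + (4:ℝ) ^ ((1:ℝ)/r) * ∑ v ∈ e', g v) :=
          mul_le_mul_of_nonneg_left (add_le_add k1 k2) (Nat.cast_nonneg _)
      _ = (Nat.factorial r : ℝ) * ((4:ℝ) ^ ((1:ℝ)/r) * ((1 / (r : ℝ)) * ∑ v, x v ^ r)) := by
          rw [← mul_add, hsum]
      _ = (Nat.factorial (r-1) : ℝ) * (4:ℝ) ^ ((1:ℝ)/r) * ∑ v, x v ^ r := by
          rw [hfact]; field_simp
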